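/- For every δ > 0 there exist constants X > 0 (depending only on C, D, ε, δ) and Y > 0 (depending only on C, D, ε) such that the following holds. If |α_P^{0,2}|, |α_P^{1,1}|, |α_P^{2,0}|, |β_P^{0,2}|, |β_P^{1,1}| are all at most X, then for every n ∈ [p, P] each of |α_n^{0,2}|, |α_n^{1,1}|, |α_n^{2,0}|, |β_n^{0,2}|, |β_n^{1,1}| is at most Y·X·max_{n ≤ s ≤ t ≤ P} { (|b_{t,s}|^{2−ε}/|a_{t,s}|)·|a_{s,n}|^{1−ε} } · max{δ, D^{ε(P−n)/2}}. -/

import Mathlib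

open Finset

noncomputable section

/-- `absProd a s t = |a_{t,s}| = |a_{t-1}| ⋯ |a_s|`. -/
def absProd (a : ℕ → ℂ) (s t : ℕ) : ℝ :=
  ∏ i ∈ Finset.Ico s t, ‖a i‖

/-- The term `(|b_{t,s}|^{2-ε}/|a_{t,s}|)·|a_{s,n}|^{1-ε}`. -/
def maxTerm (a b : ℕ → ℂ) (ε : ℝ) (n s t : ℕ) : ℝ :=
  absProd b s t ^ (2 - ε) / absProd a s t * absProd a n s ^ (1 - ε)


section Aux

variable {C D ε : ℝ} {p P : ℕ} {a b : ℕ → ℂ}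

lemma absProd_nonneg (a : ℕ → ℂ) (s t : ℕ) : 0 ≤ absProd a s t :=
  Finset.prod_nonneg fun _ _ => norm_nonneg _

lemma absProd_self (a : ℕ → ℂ) (s : ℕ) : absProd a s s = 1 := by
  simp [absProd]

def QQ (a b : ℕ → ℂ) (s t : ℕ) : ℝ := absProd b s t ^ 2 / absProd a s t

lemma QQ_nonneg (a b : ℕ → ℂ) (s t : ℕ) : 0 ≤ QQ a b s t :=
  div_nonneg (pow_nonneg (absProd_nonneg b s t) 2) (absProd_nonneg a s t)

lemma QQ_self (a b : ℕ → ℂ) (s : ℕ) : QQ a b s s = 1 := by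
  simp [QQ, absProd_self]

lemma maxTerm_nonneg (a b : ℕ → ℂ) (ε : ℝ) (n s t : ℕ) : 0 ≤ maxTerm a b ε n s t :=
  mul_nonneg (div_nonneg (Real.rpow_nonneg (absProd_nonneg b s t) _) (absProd_nonneg a s t))
    (Real.rpow_nonneg (absProd_nonneg a n s) _)

lemma pt1 {x : ℝ} (hx0 : 0 < x) (hxD : x ≤ D) (hε : 0 < ε) :
    x ^ 2 ≤ (D ^ ε) ^ 2 * (x ^ (1 - ε) * x ^ (1 - ε)) := by
  have hD0 : 0 < D := hx0.trans_le hxD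
  have e1 : x ^ (1 - ε) * x ^ (1 - ε) = x ^ (2 - 2 * ε) := by
    rw [← Real.rpow_add hx0]; congr 1; ring
  have e2 : (x : ℝ) ^ (2 : ℕ) = x ^ (ε + ε) * x ^ (2 - 2 * ε) := by
    rw [← Real.rpow_add hx0, ← Real.rpow_natCast x 2]; congr 1; push_cast; ring
  have e3 : ((D : ℝ) ^ ε) ^ (2 : ℕ) = D ^ (ε + ε) := by
    rw [← Real.rpow_natCast (D ^ ε) 2, ← Real.rpow_mul hD0.le]; congr 1; push_cast; ring
  rw [e1, e2, e3]
  exact mul_le_mul_of_nonneg_right (Real.rpow_le_rpow hx0.le hxD (by positivity))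
    (Real.rpow_nonneg hx0.le _)

lemma pt2 {x y : ℝ} (hx0 : 0 < x) (hxD : x ≤ D) (hy0 : 0 < y) (hyD : y ≤ D) (hε : 0 < ε) :
    y ^ 2 ≤ (D ^ ε) ^ 2 * (y ^ (2 - ε) / x * x ^ (1 - ε)) := by
  have hD0 : 0 < D := hx0.trans_le hxD
  have hxe : (0 : ℝ) < x ^ ε := Real.rpow_pos_of_pos hx0 ε
  have hxx : x ^ (1 - ε) * x ^ ε = x := by
    rw [← Real.rpow_add hx0, show (1 - ε) + ε = (1 : ℝ) by ring, Real.rpow_one]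
  have e0 : y ^ (2 - ε) / x * x ^ (1 - ε) = y ^ (2 - ε) / x ^ ε := by
    rw [div_mul_eq_mul_div, div_eq_div_iff hx0.ne' hxe.ne', mul_assoc, hxx]
  rw [e0, ← mul_div_assoc, le_div_iff₀ hxe]
  have e2 : (y : ℝ) ^ (2 : ℕ) * x ^ ε = (y ^ ε * x ^ ε) * y ^ (2 - ε) := by
    rw [← Real.rpow_natCast y 2, show ((2 : ℕ) : ℝ) = ε + (2 - ε) by push_cast; ring,
      Real.rpow_add hy0]; ring
  have e3 : ((D : ℝ) ^ ε) ^ (2 : ℕ) = D ^ ε * D ^ ε := by ring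
  rw [e2, e3]
  have h1 : y ^ ε * x ^ ε ≤ D ^ ε * D ^ ε :=
    mul_le_mul (Real.rpow_le_rpow hy0.le hyD hε.le) (Real.rpow_le_rpow hx0.le hxD hε.le)
      (Real.rpow_nonneg hx0.le _) (Real.rpow_nonneg hD0.le _)
  exact mul_le_mul_of_nonneg_right h1 (Real.rpow_nonneg hy0.le _)

lemma pt3 {x y : ℝ} (hx0 : 0 < x) (hxD : x ≤ D) (hy0 : 0 < y) (hyD : y ≤ D) (hε : 0 < ε) :
    (y ^ 2 / x) ^ 2 ≤ (D ^ ε) ^ 2 * (y ^ (2 - ε) / x * (y ^ (2 - ε) / x)) := by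
  have hD0 : 0 < D := hx0.trans_le hxD
  have hx2 : (0 : ℝ) < x ^ (2 : ℕ) := by positivity
  have e1 : (y ^ 2 / x) ^ 2 = (y : ℝ) ^ (4 : ℕ) / x ^ (2 : ℕ) := by
    rw [div_pow]; ring_nf
  have e2 : (D ^ ε) ^ 2 * (y ^ (2 - ε) / x * (y ^ (2 - ε) / x))
      = (D ^ ε) ^ 2 * (y ^ (2 - ε) * y ^ (2 - ε)) / x ^ (2 : ℕ) := by
    field_simp
  rw [e1, e2, div_le_div_iff₀ hx2 hx2]
  have h4 : (y : ℝ) ^ (4 : ℕ) ≤ (D ^ ε) ^ 2 * (y ^ (2 - ε) * y ^ (2 - ε)) := by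
    have e3 : y ^ (2 - ε) * y ^ (2 - ε) = y ^ (4 - 2 * ε) := by
      rw [← Real.rpow_add hy0]; congr 1; ring
    have e4 : (y : ℝ) ^ (4 : ℕ) = y ^ (ε + ε) * y ^ (4 - 2 * ε) := by
      rw [← Real.rpow_add hy0, ← Real.rpow_natCast y 4]; congr 1; push_cast; ring
    have e5 : ((D : ℝ) ^ ε) ^ (2 : ℕ) = D ^ (ε + ε) := by
      rw [← Real.rpow_natCast (D ^ ε) 2, ← Real.rpow_mul hD0.le]; congr 1; push_cast; ring
    rw [e3, e4, e5]
    exact mul_le_mul_of_nonneg_right (Real.rpow_le_rpow hy0.le hyD (by positivity))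
      (Real.rpow_nonneg hy0.le _)
  exact mul_le_mul_of_nonneg_right h4 hx2.le

lemma master_sq (hC : 0 < C) (hCD : C < D) (hε : 0 < ε)
    (hab : ∀ i, p ≤ i → i < P → C ≤ ‖a i‖ ∧ ‖a i‖ ≤ D ∧
      C ≤ ‖b i‖ ∧ ‖b i‖ ≤ D)
    {n s s' t : ℕ} (hpn : p ≤ n) (hns : n ≤ s) (hss' : s ≤ s') (hs't : s' ≤ t) (htP : t ≤ P) :
    (absProd a n s * absProd b s s' * QQ a b s' t) ^ 2
      ≤ ((D ^ ε) ^ (t - n)) ^ 2 * (maxTerm a b ε n s t * maxTerm a b ε n s' t) := by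
  have hD0 : 0 < D := hC.trans hCD
  have hfacts : ∀ i, n ≤ i → i < t →
      0 < ‖a i‖ ∧ ‖a i‖ ≤ D ∧
      0 < ‖b i‖ ∧ ‖b i‖ ≤ D := by
    intro i h1 h2
    obtain ⟨c1, c2, c3, c4⟩ := hab i (le_trans hpn h1) (lt_of_lt_of_le h2 htP)
    exact ⟨lt_of_lt_of_le hC c1, c2, lt_of_lt_of_le hC c3, c4⟩
  -- pointwise product inequalities on the three intervals
  have key1 : ∏ i ∈ Ico n s, ‖a i‖ ^ 2
      ≤ ∏ i ∈ Ico n s, ((D ^ ε) ^ 2 * (‖a i‖ ^ (1 - ε) * ‖a i‖ ^ (1 - ε))) := by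
    refine Finset.prod_le_prod (fun i _ => by positivity) fun i hi => ?_
    rw [Finset.mem_Ico] at hi
    obtain ⟨h1, h2, _, _⟩ := hfacts i hi.1 (lt_of_lt_of_le hi.2 (le_trans hss' hs't))
    exact pt1 h1 h2 hε
  have key2 : ∏ i ∈ Ico s s', ‖b i‖ ^ 2
      ≤ ∏ i ∈ Ico s s', ((D ^ ε) ^ 2 *
          (‖b i‖ ^ (2 - ε) / ‖a i‖ * ‖a i‖ ^ (1 - ε))) := by
    refine Finset.prod_le_prod (fun i _ => by positivity) fun i hi => ?_
    rw [Finset.mem_Ico] at hi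
    obtain ⟨h1, h2, h3, h4⟩ := hfacts i (le_trans hns hi.1) (lt_of_lt_of_le hi.2 hs't)
    exact pt2 h1 h2 h3 h4 hε
  have key3 : ∏ i ∈ Ico s' t, (‖b i‖ ^ 2 / ‖a i‖) ^ 2
      ≤ ∏ i ∈ Ico s' t, ((D ^ ε) ^ 2 *
          (‖b i‖ ^ (2 - ε) / ‖a i‖ *
           (‖b i‖ ^ (2 - ε) / ‖a i‖))) := by
    refine Finset.prod_le_prod (fun i _ => by positivity) fun i hi => ?_
    rw [Finset.mem_Ico] at hi
    obtain ⟨h1, h2, h3, h4⟩ := hfacts i (le_trans (le_trans hns hss') hi.1) hi.2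
    exact pt3 h1 h2 h3 h4 hε
  -- names for the interval products
  have hA2pos : 0 < absProd a s s' := Finset.prod_pos fun i hi => by
    rw [Finset.mem_Ico] at hi
    exact (hfacts i (le_trans hns hi.1) (lt_of_lt_of_le hi.2 hs't)).1
  have hA3pos : 0 < absProd a s' t := Finset.prod_pos fun i hi => by
    rw [Finset.mem_Ico] at hi
    exact (hfacts i (le_trans (le_trans hns hss') hi.1) hi.2).1
  -- rewrite LHS as a triple product
  have hL : (absProd a n s * absProd b s s' * QQ a b s' t) ^ 2
      = (∏ i ∈ Ico n s, ‖a i‖ ^ 2) * (∏ i ∈ Ico s s', ‖b i‖ ^ 2)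
        * ∏ i ∈ Ico s' t, (‖b i‖ ^ 2 / ‖a i‖) ^ 2 := by
    have hQ : QQ a b s' t = ∏ i ∈ Ico s' t, (‖b i‖ ^ 2 / ‖a i‖) := by
      unfold QQ absProd
      rw [Finset.prod_div_distrib, Finset.prod_pow]
    rw [hQ]
    unfold absProd
    rw [mul_pow, mul_pow, ← Finset.prod_pow, ← Finset.prod_pow, ← Finset.prod_pow]
  -- rewrite the three RHS interval products
  have c1 : ∏ i ∈ Ico n s, ((D ^ ε) ^ 2 * (‖a i‖ ^ (1 - ε) * ‖a i‖ ^ (1 - ε)))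
      = ((D ^ ε) ^ 2) ^ (s - n) * (absProd a n s ^ (1 - ε) * absProd a n s ^ (1 - ε)) := by
    unfold absProd
    rw [Finset.prod_mul_distrib, Finset.prod_const, Nat.card_Ico, Finset.prod_mul_distrib,
      Real.finset_prod_rpow _ _ (fun i _ => norm_nonneg _)]
  have c2 : ∏ i ∈ Ico s s', ((D ^ ε) ^ 2 *
        (‖b i‖ ^ (2 - ε) / ‖a i‖ * ‖a i‖ ^ (1 - ε)))
      = ((D ^ ε) ^ 2) ^ (s' - s) *
        (absProd b s s' ^ (2 - ε) / absProd a s s' * absProd a s s' ^ (1 - ε)) := by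
    unfold absProd
    rw [Finset.prod_mul_distrib, Finset.prod_const, Nat.card_Ico, Finset.prod_mul_distrib,
      Finset.prod_div_distrib,
      Real.finset_prod_rpow _ _ (fun i _ => norm_nonneg _),
      Real.finset_prod_rpow _ _ (fun i _ => norm_nonneg _)]
  have c3 : ∏ i ∈ Ico s' t, ((D ^ ε) ^ 2 *
        (‖b i‖ ^ (2 - ε) / ‖a i‖ *
         (‖b i‖ ^ (2 - ε) / ‖a i‖)))
      = ((D ^ ε) ^ 2) ^ (t - s') *
        (absProd b s' t ^ (2 - ε) / absProd a s' t * (absProd b s' t ^ (2 - ε) / absProd a s' t)) := by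
    unfold absProd
    rw [Finset.prod_mul_distrib, Finset.prod_const, Nat.card_Ico, Finset.prod_mul_distrib,
      Finset.prod_div_distrib,
      Real.finset_prod_rpow _ _ (fun i _ => norm_nonneg _)]
  -- splitting of maxTerm
  have hbst : absProd b s t = absProd b s s' * absProd b s' t := by
    unfold absProd; rw [Finset.prod_Ico_consecutive _ hss' hs't]
  have hast : absProd a s t = absProd a s s' * absProd a s' t := by
    unfold absProd; rw [Finset.prod_Ico_consecutive _ hss' hs't]
  have hans' : absProd a n s' = absProd a n s * absProd a s s' := by
    unfold absProd; rw [Finset.prod_Ico_consecutive _ hns hss']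
  have hm1 : maxTerm a b ε n s t
      = (absProd b s s' ^ (2 - ε) * absProd b s' t ^ (2 - ε)) / (absProd a s s' * absProd a s' t)
        * absProd a n s ^ (1 - ε) := by
    unfold maxTerm
    rw [hbst, hast, Real.mul_rpow (absProd_nonneg b s s') (absProd_nonneg b s' t)]
  have hm2 : maxTerm a b ε n s' t
      = absProd b s' t ^ (2 - ε) / absProd a s' t
        * (absProd a n s ^ (1 - ε) * absProd a s s' ^ (1 - ε)) := by
    unfold maxTerm
    rw [hans', Real.mul_rpow (absProd_nonneg a n s) (absProd_nonneg a s s')]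
  have hDpow : ((D ^ ε) ^ (t - n)) ^ 2
      = ((D ^ ε) ^ 2) ^ (s - n) * (((D ^ ε) ^ 2) ^ (s' - s) * ((D ^ ε) ^ 2) ^ (t - s')) := by
    rw [← pow_add, ← pow_add, pow_right_comm]
    congr 1
    omega
  calc (absProd a n s * absProd b s s' * QQ a b s' t) ^ 2
      = (∏ i ∈ Ico n s, ‖a i‖ ^ 2) * (∏ i ∈ Ico s s', ‖b i‖ ^ 2)
        * ∏ i ∈ Ico s' t, (‖b i‖ ^ 2 / ‖a i‖) ^ 2 := hL
    _ ≤ (∏ i ∈ Ico n s, ((D ^ ε) ^ 2 * (‖a i‖ ^ (1 - ε) * ‖a i‖ ^ (1 - ε))))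
        * (∏ i ∈ Ico s s', ((D ^ ε) ^ 2 *
            (‖b i‖ ^ (2 - ε) / ‖a i‖ * ‖a i‖ ^ (1 - ε))))
        * ∏ i ∈ Ico s' t, ((D ^ ε) ^ 2 *
            (‖b i‖ ^ (2 - ε) / ‖a i‖ *
             (‖b i‖ ^ (2 - ε) / ‖a i‖))) := by
        refine mul_le_mul (mul_le_mul key1 key2 ?_ ?_) key3 ?_ ?_
        · exact Finset.prod_nonneg fun i _ => by positivity
        · exact Finset.prod_nonneg fun i _ => by positivity
        · exact Finset.prod_nonneg fun i _ => by positivity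
        · exact mul_nonneg (Finset.prod_nonneg fun i _ => by positivity)
            (Finset.prod_nonneg fun i _ => by positivity)
    _ = ((D ^ ε) ^ (t - n)) ^ 2 * (maxTerm a b ε n s t * maxTerm a b ε n s' t) := by
        rw [c1, c2, c3, hm1, hm2, hDpow]
        field_simp

lemma master (hC : 0 < C) (hCD : C < D) (hε : 0 < ε)
    (hab : ∀ i, p ≤ i → i < P → C ≤ ‖a i‖ ∧ ‖a i‖ ≤ D ∧
      C ≤ ‖b i‖ ∧ ‖b i‖ ≤ D)
    {n s s' t : ℕ} {B : ℝ}
    (hB : ∀ s t, n ≤ s → s ≤ t → t ≤ P → maxTerm a b ε n s t ≤ B)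
    (hpn : p ≤ n) (hns : n ≤ s) (hss' : s ≤ s') (hs't : s' ≤ t) (htP : t ≤ P) :
    absProd a n s * absProd b s s' * QQ a b s' t ≤ (D ^ ε) ^ (t - n) * B := by
  have hD0 : 0 < D := hC.trans hCD
  have hB0 : 0 ≤ B := le_trans (maxTerm_nonneg a b ε n n n) (hB n n le_rfl le_rfl (le_trans (le_trans hns (le_trans hss' hs't)) htP))
  have hG0 : 0 ≤ absProd a n s * absProd b s s' * QQ a b s' t :=
    mul_nonneg (mul_nonneg (absProd_nonneg a n s) (absProd_nonneg b s s')) (QQ_nonneg a b s' t)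
  have hR0 : 0 ≤ (D ^ ε) ^ (t - n) * B := by positivity
  have hsq : (absProd a n s * absProd b s s' * QQ a b s' t) ^ 2 ≤ ((D ^ ε) ^ (t - n) * B) ^ 2 := by
    calc (absProd a n s * absProd b s s' * QQ a b s' t) ^ 2
        ≤ ((D ^ ε) ^ (t - n)) ^ 2 * (maxTerm a b ε n s t * maxTerm a b ε n s' t) :=
          master_sq hC hCD hε hab hpn hns hss' hs't htP
      _ ≤ ((D ^ ε) ^ (t - n)) ^ 2 * (B * B) := by
          refine mul_le_mul_of_nonneg_left ?_ (by positivity)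
          exact mul_le_mul (hB s t hns (le_trans hss' hs't) htP) (hB s' t (le_trans hns hss') hs't htP)
            (maxTerm_nonneg a b ε n s' t) hB0
      _ = ((D ^ ε) ^ (t - n) * B) ^ 2 := by ring
  exact (pow_le_pow_iff_left₀ hG0 hR0 two_ne_zero).mp hsq

-- derived bounds (with B based at n)
section Bounds

variable {B : ℝ}

lemma bQ (hC : 0 < C) (hCD : C < D) (hε : 0 < ε)
    (hab : ∀ i, p ≤ i → i < P → C ≤ ‖a i‖ ∧ ‖a i‖ ≤ D ∧
      C ≤ ‖b i‖ ∧ ‖b i‖ ≤ D)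
    {n t : ℕ} (hB : ∀ s t, n ≤ s → s ≤ t → t ≤ P → maxTerm a b ε n s t ≤ B)
    (hpn : p ≤ n) (hnt : n ≤ t) (htP : t ≤ P) :
    QQ a b n t ≤ (D ^ ε) ^ (t - n) * B := by
  have := master hC hCD hε hab hB hpn le_rfl le_rfl hnt htP
  simpa [absProd_self] using this

lemma bA (hC : 0 < C) (hCD : C < D) (hε : 0 < ε)
    (hab : ∀ i, p ≤ i → i < P → C ≤ ‖a i‖ ∧ ‖a i‖ ≤ D ∧
      C ≤ ‖b i‖ ∧ ‖b i‖ ≤ D)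
    {n s : ℕ} (hB : ∀ s t, n ≤ s → s ≤ t → t ≤ P → maxTerm a b ε n s t ≤ B)
    (hpn : p ≤ n) (hns : n ≤ s) (hsP : s ≤ P) :
    absProd a n s ≤ (D ^ ε) ^ (s - n) * B := by
  have := master hC hCD hε hab hB hpn hns le_rfl le_rfl hsP
  simpa [absProd_self, QQ_self] using this

lemma bBb (hC : 0 < C) (hCD : C < D) (hε : 0 < ε)
    (hab : ∀ i, p ≤ i → i < P → C ≤ ‖a i‖ ∧ ‖a i‖ ≤ D ∧
      C ≤ ‖b i‖ ∧ ‖b i‖ ≤ D)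
    {n s : ℕ} (hB : ∀ s t, n ≤ s → s ≤ t → t ≤ P → maxTerm a b ε n s t ≤ B)
    (hpn : p ≤ n) (hns : n ≤ s) (hsP : s ≤ P) :
    absProd b n s ≤ (D ^ ε) ^ (s - n) * B := by
  have := master hC hCD hε hab hB hpn le_rfl hns le_rfl hsP
  simpa [absProd_self, QQ_self] using this

-- dropping one index from the front of the quotient or of a b-product
lemma QQ_succ_le (hC : 0 < C) (hCD : C < D)
    (hab : ∀ i, p ≤ i → i < P → C ≤ ‖a i‖ ∧ ‖a i‖ ≤ D ∧
      C ≤ ‖b i‖ ∧ ‖b i‖ ≤ D)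
    {s t : ℕ} (hps : p ≤ s) (hst : s < t) (htP : t ≤ P) :
    QQ a b (s + 1) t ≤ D / C ^ 2 * QQ a b s t := by
  obtain ⟨ha1, ha2, hb1, hb2⟩ := hab s hps (lt_of_lt_of_le hst htP)
  have hx0 : 0 < ‖a s‖ := lt_of_lt_of_le hC ha1
  have hy0 : 0 < ‖b s‖ := lt_of_lt_of_le hC hb1
  have e : QQ a b s t = ‖b s‖ ^ 2 / ‖a s‖ * QQ a b (s + 1) t := by
    unfold QQ absProd
    rw [Finset.prod_eq_prod_Ico_succ_bot hst (fun i => ‖b i‖),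
      Finset.prod_eq_prod_Ico_succ_bot hst (fun i => ‖a i‖), mul_pow]
    field_simp
  have e2 : QQ a b (s + 1) t = ‖a s‖ / ‖b s‖ ^ 2 * QQ a b s t := by
    rw [e]; field_simp
  rw [e2]
  refine mul_le_mul_of_nonneg_right ?_ (QQ_nonneg a b s t)
  exact div_le_div₀ (hC.trans hCD).le ha2 (by positivity) (pow_le_pow_left₀ hC.le hb1 2)

lemma Bb_succ_le (hC : 0 < C)
    (hab : ∀ i, p ≤ i → i < P → C ≤ ‖a i‖ ∧ ‖a i‖ ≤ D ∧
      C ≤ ‖b i‖ ∧ ‖b i‖ ≤ D)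
    {s t : ℕ} (hps : p ≤ s) (hst : s < t) (htP : t ≤ P) :
    absProd b (s + 1) t ≤ C⁻¹ * absProd b s t := by
  obtain ⟨_, _, hb1, _⟩ := hab s hps (lt_of_lt_of_le hst htP)
  have hy0 : 0 < ‖b s‖ := lt_of_lt_of_le hC hb1
  have e : absProd b s t = ‖b s‖ * absProd b (s + 1) t := by
    unfold absProd
    exact Finset.prod_eq_prod_Ico_succ_bot hst (fun i => ‖b i‖)
  rw [e, ← mul_assoc]
  have h1 : (1:ℝ) ≤ C⁻¹ * ‖b s‖ := by
    rw [← div_eq_inv_mul, le_div_iff₀ hC, one_mul]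
    exact hb1
  nlinarith [absProd_nonneg b (s+1) t]

lemma bBbQ (hC : 0 < C) (hCD : C < D) (hε : 0 < ε)
    (hab : ∀ i, p ≤ i → i < P → C ≤ ‖a i‖ ∧ ‖a i‖ ≤ D ∧
      C ≤ ‖b i‖ ∧ ‖b i‖ ≤ D)
    {n s t : ℕ} (hB : ∀ s t, n ≤ s → s ≤ t → t ≤ P → maxTerm a b ε n s t ≤ B)
    (hpn : p ≤ n) (hns : n ≤ s) (hst : s < t) (htP : t ≤ P) :
    absProd b n s * QQ a b (s + 1) t ≤ D / C ^ 2 * ((D ^ ε) ^ (t - n) * B) := by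
  have hD0 : 0 < D := hC.trans hCD
  have hB0 : 0 ≤ B := le_trans (maxTerm_nonneg a b ε n n n) (hB n n le_rfl le_rfl (le_trans hns (le_trans hst.le htP)))
  have h1 : absProd b n s * QQ a b (s + 1) t ≤ absProd b n s * (D / C ^ 2 * QQ a b s t) :=
    mul_le_mul_of_nonneg_left (QQ_succ_le hC hCD hab (le_trans hpn hns) hst htP)
      (absProd_nonneg b n s)
  have h2 := master hC hCD hε hab hB hpn le_rfl hns hst.le htP
  rw [absProd_self, one_mul] at h2
  calc absProd b n s * QQ a b (s + 1) t ≤ absProd b n s * (D / C ^ 2 * QQ a b s t) := h1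
    _ = D / C ^ 2 * (absProd b n s * QQ a b s t) := by ring
    _ ≤ D / C ^ 2 * ((D ^ ε) ^ (t - n) * B) := by
        refine mul_le_mul_of_nonneg_left h2 ?_
        positivity

lemma bAQ (hC : 0 < C) (hCD : C < D) (hε : 0 < ε)
    (hab : ∀ i, p ≤ i → i < P → C ≤ ‖a i‖ ∧ ‖a i‖ ≤ D ∧
      C ≤ ‖b i‖ ∧ ‖b i‖ ≤ D)
    {n s t : ℕ} (hB : ∀ s t, n ≤ s → s ≤ t → t ≤ P → maxTerm a b ε n s t ≤ B)
    (hpn : p ≤ n) (hns : n ≤ s) (hst : s < t) (htP : t ≤ P) :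
    absProd a n s * QQ a b (s + 1) t ≤ D / C ^ 2 * ((D ^ ε) ^ (t - n) * B) := by
  have hD0 : 0 < D := hC.trans hCD
  have hB0 : 0 ≤ B := le_trans (maxTerm_nonneg a b ε n n n) (hB n n le_rfl le_rfl (le_trans hns (le_trans hst.le htP)))
  have h1 : absProd a n s * QQ a b (s + 1) t ≤ absProd a n s * (D / C ^ 2 * QQ a b s t) :=
    mul_le_mul_of_nonneg_left (QQ_succ_le hC hCD hab (le_trans hpn hns) hst htP)
      (absProd_nonneg a n s)
  have h2 := master hC hCD hε hab hB hpn hns le_rfl hst.le htP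
  rw [absProd_self, mul_one] at h2
  calc absProd a n s * QQ a b (s + 1) t ≤ absProd a n s * (D / C ^ 2 * QQ a b s t) := h1
    _ = D / C ^ 2 * (absProd a n s * QQ a b s t) := by ring
    _ ≤ D / C ^ 2 * ((D ^ ε) ^ (t - n) * B) := by
        refine mul_le_mul_of_nonneg_left h2 ?_
        positivity

lemma bABb (hC : 0 < C) (hCD : C < D) (hD1 : D < 1) (hε : 0 < ε)
    (hab : ∀ i, p ≤ i → i < P → C ≤ ‖a i‖ ∧ ‖a i‖ ≤ D ∧
      C ≤ ‖b i‖ ∧ ‖b i‖ ≤ D)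
    {n s s' : ℕ} (hB : ∀ s t, n ≤ s → s ≤ t → t ≤ P → maxTerm a b ε n s t ≤ B)
    (hpn : p ≤ n) (hns : n ≤ s) (hss' : s < s') (hs'P : s' ≤ P) :
    absProd a n s * absProd b (s + 1) s' ≤ D / C ^ 2 * ((D ^ ε) ^ (s' - n) * B) := by
  have hD0 : 0 < D := hC.trans hCD
  have hB0 : 0 ≤ B := le_trans (maxTerm_nonneg a b ε n n n) (hB n n le_rfl le_rfl (le_trans hns (le_trans hss'.le hs'P)))
  have h1 : absProd a n s * absProd b (s + 1) s' ≤ absProd a n s * (C⁻¹ * absProd b s s') :=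
    mul_le_mul_of_nonneg_left (Bb_succ_le hC hab (le_trans hpn hns) hss' hs'P)
      (absProd_nonneg a n s)
  have h2 := master hC hCD hε hab hB hpn hns hss'.le le_rfl hs'P
  rw [QQ_self, mul_one] at h2
  have hCF : C⁻¹ ≤ D / C ^ 2 := by
    rw [inv_eq_one_div, div_le_div_iff₀ hC (by positivity)]
    nlinarith
  calc absProd a n s * absProd b (s + 1) s' ≤ absProd a n s * (C⁻¹ * absProd b s s') := h1
    _ = C⁻¹ * (absProd a n s * absProd b s s') := by ring
    _ ≤ D / C ^ 2 * ((D ^ ε) ^ (s' - n) * B) := by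
        refine mul_le_mul hCF h2 ?_ ?_
        · exact mul_nonneg (absProd_nonneg a n s) (absProd_nonneg b s s')
        · positivity

lemma bABbQ (hC : 0 < C) (hCD : C < D) (hD1 : D < 1) (hε : 0 < ε)
    (hab : ∀ i, p ≤ i → i < P → C ≤ ‖a i‖ ∧ ‖a i‖ ≤ D ∧
      C ≤ ‖b i‖ ∧ ‖b i‖ ≤ D)
    {n s s' t : ℕ} (hB : ∀ s t, n ≤ s → s ≤ t → t ≤ P → maxTerm a b ε n s t ≤ B)
    (hpn : p ≤ n) (hns : n ≤ s) (hss' : s < s') (hs't : s' < t) (htP : t ≤ P) :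
    absProd a n s * absProd b (s + 1) s' * QQ a b (s' + 1) t
      ≤ (D / C ^ 2) ^ 2 * ((D ^ ε) ^ (t - n) * B) := by
  have hD0 : 0 < D := hC.trans hCD
  have hB0 : 0 ≤ B := le_trans (maxTerm_nonneg a b ε n n n) (hB n n le_rfl le_rfl (le_trans hns (le_trans hss'.le (le_trans hs't.le htP))))
  have hG := master hC hCD hε hab hB hpn hns hss'.le hs't.le htP
  have h1 : absProd b (s + 1) s' ≤ C⁻¹ * absProd b s s' :=
    Bb_succ_le hC hab (le_trans hpn hns) hss' (le_trans hs't.le htP)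
  have h2 : QQ a b (s' + 1) t ≤ D / C ^ 2 * QQ a b s' t :=
    QQ_succ_le hC hCD hab (le_trans hpn (le_trans hns hss'.le)) hs't htP
  have hCF : C⁻¹ ≤ D / C ^ 2 := by
    rw [inv_eq_one_div, div_le_div_iff₀ hC (by positivity)]
    nlinarith
  have step : absProd a n s * absProd b (s + 1) s' * QQ a b (s' + 1) t
      ≤ absProd a n s * (C⁻¹ * absProd b s s') * (D / C ^ 2 * QQ a b s' t) := by
    refine mul_le_mul (mul_le_mul_of_nonneg_left h1 (absProd_nonneg a n s)) h2
      (QQ_nonneg a b (s' + 1) t) ?_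
    exact mul_nonneg (absProd_nonneg a n s) (mul_nonneg (inv_nonneg.mpr hC.le) (absProd_nonneg b s s'))
  calc absProd a n s * absProd b (s + 1) s' * QQ a b (s' + 1) t
      ≤ absProd a n s * (C⁻¹ * absProd b s s') * (D / C ^ 2 * QQ a b s' t) := step
    _ = C⁻¹ * (D / C ^ 2) * (absProd a n s * absProd b s s' * QQ a b s' t) := by ring
    _ ≤ D / C ^ 2 * (D / C ^ 2) * ((D ^ ε) ^ (t - n) * B) := by
        refine mul_le_mul (mul_le_mul_of_nonneg_right hCF (by positivity)) hG ?_ ?_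
        · exact mul_nonneg (mul_nonneg (absProd_nonneg a n s) (absProd_nonneg b s s')) (QQ_nonneg a b s' t)
        · positivity
    _ = (D / C ^ 2) ^ 2 * ((D ^ ε) ^ (t - n) * B) := by ring

end Bounds

-- solving a backward linear recursion
lemma solve (P : ℕ) (g c e : ℕ → ℂ) :
    ∀ d n, n + d = P → (∀ m, n ≤ m → m < P → g m = c m * g (m + 1) + e m) →
      ‖g n‖ ≤ (∏ i ∈ Ico n P, ‖c i‖) * ‖g P‖ +
        ∑ s ∈ Ico n P, (∏ i ∈ Ico n s, ‖c i‖) * ‖e s‖ := by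
  intro d
  induction d with
  | zero =>
    intro n hn _
    have : n = P := by omega
    subst this
    simp
  | succ d ih =>
    intro n hn hrec
    have hnP : n < P := by omega
    have ih' := ih (n + 1) (by omega) (fun m hm hmP => hrec m (by omega) hmP)
    have step : ‖g n‖
        ≤ ‖c n‖ * ‖g (n + 1)‖ + ‖e n‖ := by
      rw [hrec n le_rfl hnP]
      exact (norm_add_le _ _).trans (by rw [norm_mul])
    have hc0 : (0 : ℝ) ≤ ‖c n‖ := norm_nonneg _
    have main := step.trans (add_le_add_left (mul_le_mul_of_nonneg_left ih' hc0) _)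
    have hsum : ∑ s ∈ Ico (n + 1) P, (∏ i ∈ Ico n s, ‖c i‖) * ‖e s‖
        = ∑ s ∈ Ico (n + 1) P,
            ‖c n‖ * ((∏ i ∈ Ico (n + 1) s, ‖c i‖) * ‖e s‖) := by
      refine Finset.sum_congr rfl fun s hs => ?_
      rw [Finset.mem_Ico] at hs
      rw [Finset.prod_eq_prod_Ico_succ_bot (by omega : n < s), mul_assoc]
    rw [Finset.prod_eq_prod_Ico_succ_bot hnP, Finset.sum_eq_sum_Ico_succ_bot hnP, hsum,
      ← Finset.mul_sum]
    calc ‖g n‖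
        ≤ ‖c n‖ * ((∏ i ∈ Ico (n + 1) P, ‖c i‖) * ‖g P‖ +
            ∑ s ∈ Ico (n + 1) P, (∏ i ∈ Ico (n + 1) s, ‖c i‖) * ‖e s‖) +
          ‖e n‖ := main
      _ = ‖c n‖ * (∏ i ∈ Ico (n + 1) P, ‖c i‖) * ‖g P‖ +
          ((∏ i ∈ Ico n n, ‖c i‖) * ‖e n‖ +
            ‖c n‖ *
              ∑ s ∈ Ico (n + 1) P, (∏ i ∈ Ico (n + 1) s, ‖c i‖) * ‖e s‖) := by
        rw [Finset.Ico_self, Finset.prod_empty]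
        ring

-- geometric sums
lemma geom_tail {x : ℝ} (h0 : 0 ≤ x) (h1 : x < 1) {n u P : ℕ} (hnu : n ≤ u) :
    ∑ s ∈ Ico u P, x ^ (s - n) ≤ x ^ (u - n) * (1 - x)⁻¹ := by
  have h2 : ∀ s ∈ Ico u P, x ^ (s - n) = x ^ (u - n) * x ^ (s - u) := by
    intro s hs
    rw [Finset.mem_Ico] at hs
    rw [← pow_add]
    congr 1
    omega
  rw [Finset.sum_congr rfl h2, ← Finset.mul_sum]
  refine mul_le_mul_of_nonneg_left ?_ (pow_nonneg h0 _)
  have h3 : ∑ s ∈ Ico u P, x ^ (s - u) = ∑ i ∈ range (P - u), x ^ i := by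
    rw [Finset.sum_Ico_eq_sum_range]
    exact Finset.sum_congr rfl fun i _ => by congr 1; omega
  rw [h3]
  have h4 := geom_sum_mul x (P - u)
  have h5 : (0:ℝ) < 1 - x := by linarith
  rw [show (1 - x)⁻¹ = 1 / (1 - x) by rw [one_div], le_div_iff₀ h5]
  nlinarith [pow_nonneg h0 (P - u), h4]

-- the explicit majorants
def R1 (a b : ℕ → ℂ) (X K : ℝ) (P n : ℕ) : ℝ :=
  X * QQ a b n P + ∑ s ∈ Ico n P, QQ a b n s * K

def R2 (a b : ℕ → ℂ) (X K : ℝ) (P n : ℕ) : ℝ :=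
  X * absProd b n P + ∑ s ∈ Ico n P, absProd b n s * (K * (R1 a b X K P (s + 1) + 1))

def R3 (a b : ℕ → ℂ) (X K : ℝ) (P n : ℕ) : ℝ :=
  X * absProd a n P +
    ∑ s ∈ Ico n P, absProd a n s *
      (K * (R1 a b X K P (s + 1) + 2 * R2 a b X K P (s + 1) + 1))

lemma R1_nonneg {X K : ℝ} (hX : 0 ≤ X) (hK : 0 ≤ K) (a b : ℕ → ℂ) (P n : ℕ) :
    0 ≤ R1 a b X K P n := by
  unfold R1
  refine add_nonneg (mul_nonneg hX (QQ_nonneg a b n P)) (Finset.sum_nonneg fun s _ => ?_)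
  exact mul_nonneg (QQ_nonneg a b n s) hK

lemma R2_nonneg {X K : ℝ} (hX : 0 ≤ X) (hK : 0 ≤ K) (a b : ℕ → ℂ) (P n : ℕ) :
    0 ≤ R2 a b X K P n := by
  unfold R2
  refine add_nonneg (mul_nonneg hX (absProd_nonneg b n P)) (Finset.sum_nonneg fun s _ => ?_)
  refine mul_nonneg (absProd_nonneg b n s) (mul_nonneg hK ?_)
  have := R1_nonneg hX hK a b P (s + 1)
  linarith

-- H-lemmas : the recursion solutions are bounded by the majorants
section Hlem

variable {X K : ℝ} {α02 x02 : ℕ → ℂ}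

lemma H1 (hrec : ∀ m, p ≤ m → m < P → α02 m = b m ^ 2 / a m * α02 (m + 1) + x02 m)
    (hx : ∀ m, ‖x02 m‖ ≤ K) (hXP : ‖α02 P‖ ≤ X) (hX : 0 ≤ X)
    {n : ℕ} (hpn : p ≤ n) (hnP : n ≤ P) :
    ‖α02 n‖ ≤ R1 a b X K P n := by
  have hprod : ∀ u v : ℕ, ∏ i ∈ Ico u v, ‖b i ^ 2 / a i‖ = QQ a b u v := by
    intro u v
    unfold QQ absProd
    rw [← Finset.prod_pow, ← Finset.prod_div_distrib]
    exact Finset.prod_congr rfl fun i _ => by rw [norm_div, norm_pow]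
  have hs := solve P α02 (fun m => b m ^ 2 / a m) x02 (P - n) n (by omega)
    (fun m hm hmP => hrec m (le_trans hpn hm) hmP)
  rw [hprod] at hs
  refine hs.trans ?_
  unfold R1
  refine add_le_add ?_ (Finset.sum_le_sum fun s hs' => ?_)
  · rw [mul_comm]
    exact mul_le_mul_of_nonneg_right hXP (QQ_nonneg a b n P)
  · rw [hprod]
    exact mul_le_mul_of_nonneg_left (hx s) (QQ_nonneg a b n s)

lemma H2 {g r x : ℕ → ℂ}
    (hα : ∀ m, p ≤ m → m ≤ P → ‖α02 m‖ ≤ R1 a b X K P m)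
    (hrec : ∀ m, p ≤ m → m < P → g m = b m * g (m + 1) + (r m * α02 (m + 1) + x m))
    (hr : ∀ m, ‖r m‖ ≤ K) (hx : ∀ m, ‖x m‖ ≤ K)
    (hXP : ‖g P‖ ≤ X) (hX : 0 ≤ X) (hK : 0 ≤ K)
    {n : ℕ} (hpn : p ≤ n) (hnP : n ≤ P) :
    ‖g n‖ ≤ R2 a b X K P n := by
  have hprod : ∀ u v : ℕ, ∏ i ∈ Ico u v, ‖b i‖ = absProd b u v := fun u v => rfl
  have hs := solve P g b (fun m => r m * α02 (m + 1) + x m) (P - n) n (by omega)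
    (fun m hm hmP => hrec m (le_trans hpn hm) hmP)
  rw [hprod] at hs
  refine hs.trans ?_
  unfold R2
  refine add_le_add ?_ (Finset.sum_le_sum fun s hs' => ?_)
  · rw [mul_comm]
    exact mul_le_mul_of_nonneg_right hXP (absProd_nonneg b n P)
  · rw [hprod]
    rw [Finset.mem_Ico] at hs'
    refine mul_le_mul_of_nonneg_left ?_ (absProd_nonneg b n s)
    have h1 : ‖r s * α02 (s + 1) + x s‖
        ≤ K * R1 a b X K P (s + 1) + K := by
      refine (norm_add_le _ _).trans (add_le_add ?_ (hx s))
      rw [norm_mul]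
      exact mul_le_mul (hr s) (hα (s + 1) (by omega) (by omega)) (norm_nonneg _) hK
    refine h1.trans ?_
    rw [mul_add, mul_one]

lemma H3 {g q1 q2 q3 x : ℕ → ℂ} {g2 g3 : ℕ → ℂ}
    (hα : ∀ m, p ≤ m → m ≤ P → ‖α02 m‖ ≤ R1 a b X K P m)
    (hg2 : ∀ m, p ≤ m → m ≤ P → ‖g2 m‖ ≤ R2 a b X K P m)
    (hg3 : ∀ m, p ≤ m → m ≤ P → ‖g3 m‖ ≤ R2 a b X K P m)
    (hrec : ∀ m, p ≤ m → m < P →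
      g m = a m * g (m + 1) + (q1 m * α02 (m + 1) + q2 m * g2 (m + 1) + q3 m * g3 (m + 1) + x m))
    (hq1 : ∀ m, ‖q1 m‖ ≤ K) (hq2 : ∀ m, ‖q2 m‖ ≤ K)
    (hq3 : ∀ m, ‖q3 m‖ ≤ K) (hx : ∀ m, ‖x m‖ ≤ K)
    (hXP : ‖g P‖ ≤ X) (hX : 0 ≤ X) (hK : 0 ≤ K)
    {n : ℕ} (hpn : p ≤ n) (hnP : n ≤ P) :
    ‖g n‖ ≤ R3 a b X K P n := by
  have hprod : ∀ u v : ℕ, ∏ i ∈ Ico u v, ‖a i‖ = absProd a u v := fun u v => rfl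
  have hs := solve P g a (fun m => q1 m * α02 (m + 1) + q2 m * g2 (m + 1) + q3 m * g3 (m + 1) + x m)
    (P - n) n (by omega) (fun m hm hmP => hrec m (le_trans hpn hm) hmP)
  rw [hprod] at hs
  refine hs.trans ?_
  unfold R3
  refine add_le_add ?_ (Finset.sum_le_sum fun s hs' => ?_)
  · rw [mul_comm]
    exact mul_le_mul_of_nonneg_right hXP (absProd_nonneg a n P)
  · rw [hprod]
    rw [Finset.mem_Ico] at hs'
    refine mul_le_mul_of_nonneg_left ?_ (absProd_nonneg a n s)
    have h1 : ‖q1 s * α02 (s + 1) + q2 s * g2 (s + 1) + q3 s * g3 (s + 1) + x s‖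
        ≤ K * R1 a b X K P (s + 1) + K * R2 a b X K P (s + 1) + K * R2 a b X K P (s + 1) + K := by
      refine (norm_add_le _ _).trans (add_le_add ?_ (hx s))
      refine (norm_add_le _ _).trans (add_le_add ?_ ?_)
      · refine (norm_add_le _ _).trans (add_le_add ?_ ?_)
        · rw [norm_mul]
          exact mul_le_mul (hq1 s) (hα (s + 1) (by omega) (by omega)) (norm_nonneg _) hK
        · rw [norm_mul]
          exact mul_le_mul (hq2 s) (hg2 (s + 1) (by omega) (by omega)) (norm_nonneg _) hK
      · rw [norm_mul]
        exact mul_le_mul (hq3 s) (hg3 (s + 1) (by omega) (by omega)) (norm_nonneg _) hK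
    refine h1.trans ?_
    have := R2_nonneg hX hK a b P (s + 1)
    have := R1_nonneg hX hK a b P (s + 1)
    nlinarith

end Hlem

-- geometric double-sum helpers
lemma sum_two_geom {c1 c2 mu lam T' : ℝ} (hc1 : 0 ≤ c1) (hc2 : 0 ≤ c2)
    (hmu0 : 0 ≤ mu) (hmu1 : mu < 1) (hlam0 : 0 ≤ lam) (hlam1 : lam < 1)
    (hT : (1 - mu)⁻¹ ≤ T') (hTl : (1 - lam)⁻¹ ≤ T') (n P : ℕ) :
    ∑ s ∈ Ico n P, (c1 * mu ^ (s - n) + c2 * lam ^ (s - n)) ≤ c1 * T' + c2 * T' := by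
  rw [Finset.sum_add_distrib, ← Finset.mul_sum, ← Finset.mul_sum]
  have g1 : ∑ s ∈ Ico n P, mu ^ (s - n) ≤ T' := by
    have h := geom_tail hmu0 hmu1 (le_refl n) (P := P)
    rw [Nat.sub_self, pow_zero, one_mul] at h
    exact h.trans hT
  have g2 : ∑ s ∈ Ico n P, lam ^ (s - n) ≤ T' := by
    have h := geom_tail hlam0 hlam1 (le_refl n) (P := P)
    rw [Nat.sub_self, pow_zero, one_mul] at h
    exact h.trans hTl
  exact add_le_add (mul_le_mul_of_nonneg_left g1 hc1) (mul_le_mul_of_nonneg_left g2 hc2)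

lemma sum_two_geom_shift {c1 c2 mu lam T' : ℝ} (hc1 : 0 ≤ c1) (hc2 : 0 ≤ c2)
    (hmu0 : 0 ≤ mu) (hmu1 : mu < 1) (hlam0 : 0 ≤ lam) (hlam1 : lam < 1)
    (hT : (1 - mu)⁻¹ ≤ T') (hTl : (1 - lam)⁻¹ ≤ T') {n s P : ℕ} (hns : n ≤ s) :
    ∑ s' ∈ Ico (s + 1) P, (c1 * mu ^ (s' - n) + c2 * lam ^ (s' - n))
      ≤ c1 * mu ^ (s - n) * T' + c2 * lam ^ (s - n) * T' := by
  rw [Finset.sum_add_distrib, ← Finset.mul_sum, ← Finset.mul_sum]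
  have h1mu : (0:ℝ) < 1 - mu := by linarith
  have h1lam : (0:ℝ) < 1 - lam := by linarith
  have hT'0 : 0 ≤ T' := le_trans (inv_nonneg.mpr h1mu.le) hT
  have g1 : ∑ s' ∈ Ico (s + 1) P, mu ^ (s' - n) ≤ mu ^ (s - n) * T' := by
    refine (geom_tail hmu0 hmu1 (by omega : n ≤ s + 1)).trans ?_
    exact mul_le_mul (pow_le_pow_of_le_one hmu0 hmu1.le (by omega)) hT
      (inv_nonneg.mpr h1mu.le) (pow_nonneg hmu0 _)
  have g2 : ∑ s' ∈ Ico (s + 1) P, lam ^ (s' - n) ≤ lam ^ (s - n) * T' := by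
    refine (geom_tail hlam0 hlam1 (by omega : n ≤ s + 1)).trans ?_
    exact mul_le_mul (pow_le_pow_of_le_one hlam0 hlam1.le (by omega)) hTl
      (inv_nonneg.mpr h1lam.le) (pow_nonneg hlam0 _)
  calc c1 * ∑ s' ∈ Ico (s+1) P, mu ^ (s' - n) + c2 * ∑ s' ∈ Ico (s+1) P, lam ^ (s' - n)
      ≤ c1 * (mu ^ (s - n) * T') + c2 * (lam ^ (s - n) * T') :=
        add_le_add (mul_le_mul_of_nonneg_left g1 hc1) (mul_le_mul_of_nonneg_left g2 hc2)
    _ = c1 * mu ^ (s - n) * T' + c2 * lam ^ (s - n) * T' := by ring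

section Nlem

variable {B X K : ℝ} {n : ℕ}

lemma R1_step (hC : 0 < C) (hCD : C < D) (hD1 : D < 1) (hε : 0 < ε)
    (hab : ∀ i, p ≤ i → i < P → C ≤ ‖a i‖ ∧ ‖a i‖ ≤ D ∧
      C ≤ ‖b i‖ ∧ ‖b i‖ ≤ D)
    (hB : ∀ s t, n ≤ s → s ≤ t → t ≤ P → maxTerm a b ε n s t ≤ B)
    (hX : 0 ≤ X) (hK : 0 ≤ K)
    {W F' : ℝ} (hW0 : 0 ≤ W) (hF' : 0 ≤ F') {u : ℕ} (hnu : n ≤ u) (huP : u < P)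
    (hQb : ∀ t, u < t → t ≤ P → W * QQ a b (u + 1) t ≤ F' * ((D ^ ε) ^ (t - n) * B)) :
    W * R1 a b X K P (u + 1)
      ≤ (X * F' * ((D ^ (ε/2)) ^ (P - n) * (D ^ (ε/2)) ^ (u - n))
          + K * F' * (1 - D ^ (ε/2))⁻¹ * (D ^ ε) ^ (u - n)) * B := by
  have hD0 : 0 < D := hC.trans hCD
  have hB0 : 0 ≤ B := le_trans (maxTerm_nonneg a b ε n n n) (hB n n le_rfl le_rfl (by omega))
  have hlam0 : (0:ℝ) < D ^ ε := Real.rpow_pos_of_pos hD0 ε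
  have hlam1 : D ^ ε < 1 := Real.rpow_lt_one hD0.le hD1 hε
  have hmu0 : (0:ℝ) < D ^ (ε/2) := Real.rpow_pos_of_pos hD0 _
  have hmu1 : D ^ (ε/2) < 1 := Real.rpow_lt_one hD0.le hD1 (by linarith)
  have hmu1' : (0:ℝ) < 1 - D ^ (ε/2) := by linarith
  have hlam1' : (0:ℝ) < 1 - D ^ ε := by linarith
  have hlam_split : ∀ m : ℕ, (D ^ ε) ^ m = (D ^ (ε/2)) ^ m * (D ^ (ε/2)) ^ m := by
    intro m
    rw [← mul_pow, ← Real.rpow_add hD0]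
    congr 2
    ring
  have hTl : (1 - D ^ ε)⁻¹ ≤ (1 - D ^ (ε/2))⁻¹ := by
    have h2 : 1 - D ^ (ε/2) ≤ 1 - D ^ ε := by
      have : D ^ ε ≤ D ^ (ε/2) := Real.rpow_le_rpow_of_exponent_ge hD0 hD1.le (by linarith)
      linarith
    exact inv_anti₀ hmu1' h2
  unfold R1
  rw [mul_add, Finset.mul_sum]
  have t1 : W * (X * QQ a b (u + 1) P)
      ≤ X * F' * ((D ^ (ε/2)) ^ (P - n) * (D ^ (ε/2)) ^ (u - n)) * B := by
    have h := hQb P (by omega) le_rfl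
    have hmono : (D ^ ε) ^ (P - n) ≤ (D ^ (ε/2)) ^ (P - n) * (D ^ (ε/2)) ^ (u - n) := by
      rw [hlam_split]
      exact mul_le_mul_of_nonneg_left (pow_le_pow_of_le_one hmu0.le hmu1.le (by omega))
        (pow_nonneg hmu0.le _)
    calc W * (X * QQ a b (u + 1) P) = X * (W * QQ a b (u + 1) P) := by ring
      _ ≤ X * (F' * ((D ^ ε) ^ (P - n) * B)) := mul_le_mul_of_nonneg_left h hX
      _ ≤ X * (F' * (((D ^ (ε/2)) ^ (P - n) * (D ^ (ε/2)) ^ (u - n)) * B)) := by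
          refine mul_le_mul_of_nonneg_left (mul_le_mul_of_nonneg_left ?_ hF') hX
          exact mul_le_mul_of_nonneg_right hmono hB0
      _ = X * F' * ((D ^ (ε/2)) ^ (P - n) * (D ^ (ε/2)) ^ (u - n)) * B := by ring
  have t2 : ∑ t ∈ Ico (u + 1) P, W * (QQ a b (u + 1) t * K)
      ≤ K * F' * (1 - D ^ (ε/2))⁻¹ * (D ^ ε) ^ (u - n) * B := by
    have per : ∀ t ∈ Ico (u + 1) P, W * (QQ a b (u + 1) t * K)
        ≤ (D ^ ε) ^ (t - n) * (F' * B * K) := by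
      intro t ht
      rw [Finset.mem_Ico] at ht
      have h := hQb t (by omega) (by omega)
      calc W * (QQ a b (u + 1) t * K) = W * QQ a b (u + 1) t * K := by ring
        _ ≤ F' * ((D ^ ε) ^ (t - n) * B) * K := mul_le_mul_of_nonneg_right h hK
        _ = (D ^ ε) ^ (t - n) * (F' * B * K) := by ring
    refine (Finset.sum_le_sum per).trans ?_
    rw [← Finset.sum_mul]
    have hg : ∑ t ∈ Ico (u + 1) P, (D ^ ε) ^ (t - n)
        ≤ (D ^ ε) ^ (u - n) * (1 - D ^ (ε/2))⁻¹ := by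
      refine (geom_tail hlam0.le hlam1 (by omega : n ≤ u + 1)).trans ?_
      exact mul_le_mul (pow_le_pow_of_le_one hlam0.le hlam1.le (by omega)) hTl
        (by positivity) (pow_nonneg hlam0.le _)
    calc (∑ t ∈ Ico (u + 1) P, (D ^ ε) ^ (t - n)) * (F' * B * K)
        ≤ ((D ^ ε) ^ (u - n) * (1 - D ^ (ε/2))⁻¹) * (F' * B * K) := by
          refine mul_le_mul_of_nonneg_right hg ?_
          exact mul_nonneg (mul_nonneg hF' hB0) hK
      _ = K * F' * (1 - D ^ (ε/2))⁻¹ * (D ^ ε) ^ (u - n) * B := by ring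
  refine (add_le_add t1 t2).trans (le_of_eq (by ring))

lemma N1 (hC : 0 < C) (hCD : C < D) (hD1 : D < 1) (hε : 0 < ε)
    (hab : ∀ i, p ≤ i → i < P → C ≤ ‖a i‖ ∧ ‖a i‖ ≤ D ∧
      C ≤ ‖b i‖ ∧ ‖b i‖ ≤ D)
    (hB : ∀ s t, n ≤ s → s ≤ t → t ≤ P → maxTerm a b ε n s t ≤ B)
    (hX : 0 ≤ X) (hK : 0 ≤ K) (hpn : p ≤ n) (hnP : n ≤ P) :
    R1 a b X K P n
      ≤ (X * (D ^ (ε/2)) ^ (P - n) + K * (1 - D ^ (ε/2))⁻¹) * B := by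
  have hD0 : 0 < D := hC.trans hCD
  have hB0 : 0 ≤ B := le_trans (maxTerm_nonneg a b ε n n n) (hB n n le_rfl le_rfl hnP)
  have hlam0 : (0:ℝ) < D ^ ε := Real.rpow_pos_of_pos hD0 ε
  have hlam1 : D ^ ε < 1 := Real.rpow_lt_one hD0.le hD1 hε
  have hmu0 : (0:ℝ) < D ^ (ε/2) := Real.rpow_pos_of_pos hD0 _
  have hmu1 : D ^ (ε/2) < 1 := Real.rpow_lt_one hD0.le hD1 (by linarith)
  have hmu1' : (0:ℝ) < 1 - D ^ (ε/2) := by linarith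
  have hlam_le : D ^ ε ≤ D ^ (ε/2) := Real.rpow_le_rpow_of_exponent_ge hD0 hD1.le (by linarith)
  have hTl : (1 - D ^ ε)⁻¹ ≤ (1 - D ^ (ε/2))⁻¹ :=
    inv_anti₀ hmu1' (by linarith)
  unfold R1
  have t1 : X * QQ a b n P ≤ X * (D ^ (ε/2)) ^ (P - n) * B := by
    have h := bQ hC hCD hε hab hB hpn hnP le_rfl
    calc X * QQ a b n P ≤ X * ((D ^ ε) ^ (P - n) * B) := mul_le_mul_of_nonneg_left h hX
      _ ≤ X * ((D ^ (ε/2)) ^ (P - n) * B) := by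
          refine mul_le_mul_of_nonneg_left (mul_le_mul_of_nonneg_right ?_ hB0) hX
          exact pow_le_pow_left₀ hlam0.le hlam_le _
      _ = X * (D ^ (ε/2)) ^ (P - n) * B := by ring
  have t2 : ∑ s ∈ Ico n P, QQ a b n s * K ≤ K * (1 - D ^ (ε/2))⁻¹ * B := by
    have per : ∀ s ∈ Ico n P, QQ a b n s * K ≤ (D ^ ε) ^ (s - n) * (B * K) := by
      intro s hs
      rw [Finset.mem_Ico] at hs
      have h := bQ hC hCD hε hab hB hpn hs.1 (by omega)
      calc QQ a b n s * K ≤ (D ^ ε) ^ (s - n) * B * K := mul_le_mul_of_nonneg_right h hK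
        _ = (D ^ ε) ^ (s - n) * (B * K) := by ring
    refine (Finset.sum_le_sum per).trans ?_
    rw [← Finset.sum_mul]
    have hg : ∑ s ∈ Ico n P, (D ^ ε) ^ (s - n) ≤ (1 - D ^ (ε/2))⁻¹ := by
      have h := geom_tail hlam0.le hlam1 (le_refl n) (P := P)
      rw [Nat.sub_self, pow_zero, one_mul] at h
      exact h.trans hTl
    calc (∑ s ∈ Ico n P, (D ^ ε) ^ (s - n)) * (B * K)
        ≤ (1 - D ^ (ε/2))⁻¹ * (B * K) :=
          mul_le_mul_of_nonneg_right hg (mul_nonneg hB0 hK)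
      _ = K * (1 - D ^ (ε/2))⁻¹ * B := by ring
  refine (add_le_add t1 t2).trans (le_of_eq (by ring))

lemma N2 (hC : 0 < C) (hCD : C < D) (hD1 : D < 1) (hε : 0 < ε)
    (hab : ∀ i, p ≤ i → i < P → C ≤ ‖a i‖ ∧ ‖a i‖ ≤ D ∧
      C ≤ ‖b i‖ ∧ ‖b i‖ ≤ D)
    (hB : ∀ s t, n ≤ s → s ≤ t → t ≤ P → maxTerm a b ε n s t ≤ B)
    (hX : 0 ≤ X) (hK : 0 ≤ K) (hpn : p ≤ n) (hnP : n ≤ P) :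
    R2 a b X K P n
      ≤ (X * (D ^ (ε/2)) ^ (P - n) * (1 + K * (D / C ^ 2) * (1 - D ^ (ε/2))⁻¹)
          + (K * (1 - D ^ (ε/2))⁻¹ + K ^ 2 * (D / C ^ 2) * ((1 - D ^ (ε/2))⁻¹) ^ 2)) * B := by
  have hD0 : 0 < D := hC.trans hCD
  have hB0 : 0 ≤ B := le_trans (maxTerm_nonneg a b ε n n n) (hB n n le_rfl le_rfl hnP)
  have hlam0 : (0:ℝ) < D ^ ε := Real.rpow_pos_of_pos hD0 ε
  have hlam1 : D ^ ε < 1 := Real.rpow_lt_one hD0.le hD1 hε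
  have hmu0 : (0:ℝ) < D ^ (ε/2) := Real.rpow_pos_of_pos hD0 _
  have hmu1 : D ^ (ε/2) < 1 := Real.rpow_lt_one hD0.le hD1 (by linarith)
  have hmu1' : (0:ℝ) < 1 - D ^ (ε/2) := by linarith
  have hlam_le : D ^ ε ≤ D ^ (ε/2) := Real.rpow_le_rpow_of_exponent_ge hD0 hD1.le (by linarith)
  have hTl : (1 - D ^ ε)⁻¹ ≤ (1 - D ^ (ε/2))⁻¹ := inv_anti₀ hmu1' (by linarith)
  have hF0 : (0:ℝ) ≤ D / C ^ 2 := by positivity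
  have hT0 : (0:ℝ) ≤ (1 - D ^ (ε/2))⁻¹ := inv_nonneg.mpr hmu1'.le
  unfold R2
  have t1 : X * absProd b n P ≤ X * (D ^ (ε/2)) ^ (P - n) * B := by
    have h := bBb hC hCD hε hab hB hpn hnP le_rfl
    calc X * absProd b n P ≤ X * ((D ^ ε) ^ (P - n) * B) := mul_le_mul_of_nonneg_left h hX
      _ ≤ X * ((D ^ (ε/2)) ^ (P - n) * B) := by
          refine mul_le_mul_of_nonneg_left (mul_le_mul_of_nonneg_right ?_ hB0) hX
          exact pow_le_pow_left₀ hlam0.le hlam_le _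
      _ = X * (D ^ (ε/2)) ^ (P - n) * B := by ring
  have hper : ∀ s ∈ Ico n P, absProd b n s * (K * (R1 a b X K P (s + 1) + 1))
      ≤ (X * (D / C ^ 2) * (D ^ (ε/2)) ^ (P - n) * (K * B)) * (D ^ (ε/2)) ^ (s - n)
        + ((K * (D / C ^ 2) * (1 - D ^ (ε/2))⁻¹ + 1) * (K * B)) * (D ^ ε) ^ (s - n) := by
    intro s hs
    rw [Finset.mem_Ico] at hs
    have hstep := R1_step hC hCD hD1 hε hab hB hX hK (absProd_nonneg b n s) hF0 hs.1 hs.2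
      (fun t ht1 ht2 => bBbQ hC hCD hε hab hB hpn hs.1 ht1 ht2)
    have hBb := bBb hC hCD hε hab hB hpn hs.1 (by omega)
    calc absProd b n s * (K * (R1 a b X K P (s + 1) + 1))
        = K * (absProd b n s * R1 a b X K P (s + 1)) + K * absProd b n s := by ring
      _ ≤ K * ((X * (D / C ^ 2) * ((D ^ (ε/2)) ^ (P - n) * (D ^ (ε/2)) ^ (s - n))
            + K * (D / C ^ 2) * (1 - D ^ (ε/2))⁻¹ * (D ^ ε) ^ (s - n)) * B)
          + K * ((D ^ ε) ^ (s - n) * B) :=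
          add_le_add (mul_le_mul_of_nonneg_left hstep hK) (mul_le_mul_of_nonneg_left hBb hK)
      _ = (X * (D / C ^ 2) * (D ^ (ε/2)) ^ (P - n) * (K * B)) * (D ^ (ε/2)) ^ (s - n)
          + ((K * (D / C ^ 2) * (1 - D ^ (ε/2))⁻¹ + 1) * (K * B)) * (D ^ ε) ^ (s - n) := by
          ring
  have hsum := (Finset.sum_le_sum hper).trans
    (sum_two_geom (by positivity) (by positivity) hmu0.le hmu1 hlam0.le hlam1 le_rfl hTl n P)
  refine (add_le_add t1 hsum).trans (le_of_eq (by ring))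

lemma N2A (hC : 0 < C) (hCD : C < D) (hD1 : D < 1) (hε : 0 < ε)
    (hab : ∀ i, p ≤ i → i < P → C ≤ ‖a i‖ ∧ ‖a i‖ ≤ D ∧
      C ≤ ‖b i‖ ∧ ‖b i‖ ≤ D)
    (hB : ∀ s t, n ≤ s → s ≤ t → t ≤ P → maxTerm a b ε n s t ≤ B)
    (hX : 0 ≤ X) (hK : 0 ≤ K) (hpn : p ≤ n) {s : ℕ} (hns : n ≤ s) (hsP : s < P) :
    absProd a n s * R2 a b X K P (s + 1)
      ≤ ((X * (D / C ^ 2) * (D ^ (ε/2)) ^ (P - n)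
            + X * (D / C ^ 2) ^ 2 * (D ^ (ε/2)) ^ (P - n) * K * (1 - D ^ (ε/2))⁻¹)
              * (D ^ (ε/2)) ^ (s - n)
          + ((K * (D / C ^ 2) ^ 2 * (1 - D ^ (ε/2))⁻¹ + D / C ^ 2) * K * (1 - D ^ (ε/2))⁻¹)
              * (D ^ ε) ^ (s - n)) * B := by
  have hD0 : 0 < D := hC.trans hCD
  have hB0 : 0 ≤ B := le_trans (maxTerm_nonneg a b ε n n n)
    (hB n n le_rfl le_rfl (by omega))
  have hlam0 : (0:ℝ) < D ^ ε := Real.rpow_pos_of_pos hD0 ε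
  have hlam1 : D ^ ε < 1 := Real.rpow_lt_one hD0.le hD1 hε
  have hmu0 : (0:ℝ) < D ^ (ε/2) := Real.rpow_pos_of_pos hD0 _
  have hmu1 : D ^ (ε/2) < 1 := Real.rpow_lt_one hD0.le hD1 (by linarith)
  have hmu1' : (0:ℝ) < 1 - D ^ (ε/2) := by linarith
  have hlam_le : D ^ ε ≤ D ^ (ε/2) := Real.rpow_le_rpow_of_exponent_ge hD0 hD1.le (by linarith)
  have hTl : (1 - D ^ ε)⁻¹ ≤ (1 - D ^ (ε/2))⁻¹ := inv_anti₀ hmu1' (by linarith)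
  have hF0 : (0:ℝ) ≤ D / C ^ 2 := by positivity
  have hT0 : (0:ℝ) ≤ (1 - D ^ (ε/2))⁻¹ := inv_nonneg.mpr hmu1'.le
  have hlam_split : ∀ m : ℕ, (D ^ ε) ^ m = (D ^ (ε/2)) ^ m * (D ^ (ε/2)) ^ m := by
    intro m
    rw [← mul_pow, ← Real.rpow_add hD0]
    congr 2
    ring
  unfold R2
  rw [mul_add, Finset.mul_sum]
  have t1 : absProd a n s * (X * absProd b (s + 1) P)
      ≤ X * (D / C ^ 2) * (D ^ (ε/2)) ^ (P - n) * (D ^ (ε/2)) ^ (s - n) * B := by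
    have h := bABb hC hCD hD1 hε hab hB hpn hns hsP le_rfl
    have hmono : (D ^ ε) ^ (P - n) ≤ (D ^ (ε/2)) ^ (P - n) * (D ^ (ε/2)) ^ (s - n) := by
      rw [hlam_split]
      exact mul_le_mul_of_nonneg_left (pow_le_pow_of_le_one hmu0.le hmu1.le (by omega))
        (pow_nonneg hmu0.le _)
    calc absProd a n s * (X * absProd b (s + 1) P)
        = X * (absProd a n s * absProd b (s + 1) P) := by ring
      _ ≤ X * (D / C ^ 2 * ((D ^ ε) ^ (P - n) * B)) := mul_le_mul_of_nonneg_left h hX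
      _ ≤ X * (D / C ^ 2 * (((D ^ (ε/2)) ^ (P - n) * (D ^ (ε/2)) ^ (s - n)) * B)) := by
          refine mul_le_mul_of_nonneg_left (mul_le_mul_of_nonneg_left ?_ hF0) hX
          exact mul_le_mul_of_nonneg_right hmono hB0
      _ = X * (D / C ^ 2) * (D ^ (ε/2)) ^ (P - n) * (D ^ (ε/2)) ^ (s - n) * B := by ring
  have hper : ∀ s' ∈ Ico (s + 1) P,
      absProd a n s * (absProd b (s + 1) s' * (K * (R1 a b X K P (s' + 1) + 1)))
      ≤ (X * (D / C ^ 2) ^ 2 * (D ^ (ε/2)) ^ (P - n) * (K * B)) * (D ^ (ε/2)) ^ (s' - n)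
        + ((K * (D / C ^ 2) ^ 2 * (1 - D ^ (ε/2))⁻¹ + D / C ^ 2) * (K * B)) * (D ^ ε) ^ (s' - n) := by
    intro s' hs'
    rw [Finset.mem_Ico] at hs'
    have hW0 : (0:ℝ) ≤ absProd a n s * absProd b (s + 1) s' :=
      mul_nonneg (absProd_nonneg a n s) (absProd_nonneg b (s + 1) s')
    have hstep := R1_step hC hCD hD1 hε hab hB hX hK hW0 (by positivity : (0:ℝ) ≤ (D / C ^ 2) ^ 2)
      (by omega : n ≤ s') (by omega : s' < P)
      (fun t ht1 ht2 => bABbQ hC hCD hD1 hε hab hB hpn hns (by omega) ht1 ht2)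
    have hAB := bABb hC hCD hD1 hε hab hB hpn hns (by omega : s < s') (by omega : s' ≤ P)
    calc absProd a n s * (absProd b (s + 1) s' * (K * (R1 a b X K P (s' + 1) + 1)))
        = K * (absProd a n s * absProd b (s + 1) s' * R1 a b X K P (s' + 1))
          + K * (absProd a n s * absProd b (s + 1) s') := by ring
      _ ≤ K * ((X * (D / C ^ 2) ^ 2 * ((D ^ (ε/2)) ^ (P - n) * (D ^ (ε/2)) ^ (s' - n))
            + K * (D / C ^ 2) ^ 2 * (1 - D ^ (ε/2))⁻¹ * (D ^ ε) ^ (s' - n)) * B)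
          + K * (D / C ^ 2 * ((D ^ ε) ^ (s' - n) * B)) :=
          add_le_add (mul_le_mul_of_nonneg_left hstep hK) (mul_le_mul_of_nonneg_left hAB hK)
      _ = (X * (D / C ^ 2) ^ 2 * (D ^ (ε/2)) ^ (P - n) * (K * B)) * (D ^ (ε/2)) ^ (s' - n)
          + ((K * (D / C ^ 2) ^ 2 * (1 - D ^ (ε/2))⁻¹ + D / C ^ 2) * (K * B)) * (D ^ ε) ^ (s' - n) := by
          ring
  have hsum := (Finset.sum_le_sum hper).trans
    (sum_two_geom_shift (by positivity) (by positivity) hmu0.le hmu1 hlam0.le hlam1 le_rfl hTl hns)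
  refine (add_le_add t1 hsum).trans (le_of_eq (by ring))

lemma N3 (hC : 0 < C) (hCD : C < D) (hD1 : D < 1) (hε : 0 < ε)
    (hab : ∀ i, p ≤ i → i < P → C ≤ ‖a i‖ ∧ ‖a i‖ ≤ D ∧
      C ≤ ‖b i‖ ∧ ‖b i‖ ≤ D)
    (hB : ∀ s t, n ≤ s → s ≤ t → t ≤ P → maxTerm a b ε n s t ≤ B)
    (hX : 0 ≤ X) (hK : 0 ≤ K) (hpn : p ≤ n) (hnP : n ≤ P) :
    R3 a b X K P n
      ≤ (X * (D ^ (ε/2)) ^ (P - n) *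
            (1 + 3 * K * (D / C ^ 2) * (1 - D ^ (ε/2))⁻¹
               + 2 * K ^ 2 * (D / C ^ 2) ^ 2 * ((1 - D ^ (ε/2))⁻¹) ^ 2)
          + (K * (1 - D ^ (ε/2))⁻¹ + 3 * K ^ 2 * (D / C ^ 2) * ((1 - D ^ (ε/2))⁻¹) ^ 2
               + 2 * K ^ 3 * (D / C ^ 2) ^ 2 * ((1 - D ^ (ε/2))⁻¹) ^ 3)) * B := by
  have hD0 : 0 < D := hC.trans hCD
  have hB0 : 0 ≤ B := le_trans (maxTerm_nonneg a b ε n n n) (hB n n le_rfl le_rfl hnP)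
  have hlam0 : (0:ℝ) < D ^ ε := Real.rpow_pos_of_pos hD0 ε
  have hlam1 : D ^ ε < 1 := Real.rpow_lt_one hD0.le hD1 hε
  have hmu0 : (0:ℝ) < D ^ (ε/2) := Real.rpow_pos_of_pos hD0 _
  have hmu1 : D ^ (ε/2) < 1 := Real.rpow_lt_one hD0.le hD1 (by linarith)
  have hmu1' : (0:ℝ) < 1 - D ^ (ε/2) := by linarith
  have hlam_le : D ^ ε ≤ D ^ (ε/2) := Real.rpow_le_rpow_of_exponent_ge hD0 hD1.le (by linarith)
  have hTl : (1 - D ^ ε)⁻¹ ≤ (1 - D ^ (ε/2))⁻¹ := inv_anti₀ hmu1' (by linarith)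
  have hF0 : (0:ℝ) ≤ D / C ^ 2 := by positivity
  have hT0 : (0:ℝ) ≤ (1 - D ^ (ε/2))⁻¹ := inv_nonneg.mpr hmu1'.le
  unfold R3
  have t1 : X * absProd a n P ≤ X * (D ^ (ε/2)) ^ (P - n) * B := by
    have h := bA hC hCD hε hab hB hpn hnP le_rfl
    calc X * absProd a n P ≤ X * ((D ^ ε) ^ (P - n) * B) := mul_le_mul_of_nonneg_left h hX
      _ ≤ X * ((D ^ (ε/2)) ^ (P - n) * B) := by
          refine mul_le_mul_of_nonneg_left (mul_le_mul_of_nonneg_right ?_ hB0) hX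
          exact pow_le_pow_left₀ hlam0.le hlam_le _
      _ = X * (D ^ (ε/2)) ^ (P - n) * B := by ring
  have hper : ∀ s ∈ Ico n P,
      absProd a n s * (K * (R1 a b X K P (s + 1) + 2 * R2 a b X K P (s + 1) + 1))
      ≤ ((K * X * (D ^ (ε/2)) ^ (P - n) *
            (3 * (D / C ^ 2) + 2 * K * (D / C ^ 2) ^ 2 * (1 - D ^ (ε/2))⁻¹)) * B)
              * (D ^ (ε/2)) ^ (s - n)
        + ((K * (K * (D / C ^ 2) * (1 - D ^ (ε/2))⁻¹
            + 2 * (K * (D / C ^ 2) ^ 2 * (1 - D ^ (ε/2))⁻¹ + D / C ^ 2) * K * (1 - D ^ (ε/2))⁻¹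
            + 1)) * B) * (D ^ ε) ^ (s - n) := by
    intro s hs
    rw [Finset.mem_Ico] at hs
    have hstep := R1_step hC hCD hD1 hε hab hB hX hK (absProd_nonneg a n s) hF0 hs.1 hs.2
      (fun t ht1 ht2 => bAQ hC hCD hε hab hB hpn hs.1 ht1 ht2)
    have hA := bA hC hCD hε hab hB hpn hs.1 (by omega)
    have h2A := N2A hC hCD hD1 hε hab hB hX hK hpn hs.1 hs.2
    calc absProd a n s * (K * (R1 a b X K P (s + 1) + 2 * R2 a b X K P (s + 1) + 1))
        = K * (absProd a n s * R1 a b X K P (s + 1))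
          + 2 * K * (absProd a n s * R2 a b X K P (s + 1)) + K * absProd a n s := by ring
      _ ≤ K * ((X * (D / C ^ 2) * ((D ^ (ε/2)) ^ (P - n) * (D ^ (ε/2)) ^ (s - n))
            + K * (D / C ^ 2) * (1 - D ^ (ε/2))⁻¹ * (D ^ ε) ^ (s - n)) * B)
          + 2 * K * (((X * (D / C ^ 2) * (D ^ (ε/2)) ^ (P - n)
              + X * (D / C ^ 2) ^ 2 * (D ^ (ε/2)) ^ (P - n) * K * (1 - D ^ (ε/2))⁻¹)
                * (D ^ (ε/2)) ^ (s - n)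
            + ((K * (D / C ^ 2) ^ 2 * (1 - D ^ (ε/2))⁻¹ + D / C ^ 2) * K * (1 - D ^ (ε/2))⁻¹)
                * (D ^ ε) ^ (s - n)) * B)
          + K * ((D ^ ε) ^ (s - n) * B) := by
          refine add_le_add (add_le_add (mul_le_mul_of_nonneg_left hstep hK) ?_)
            (mul_le_mul_of_nonneg_left hA hK)
          exact mul_le_mul_of_nonneg_left h2A (by positivity)
      _ = _ := by ring
  have hsum := (Finset.sum_le_sum hper).trans
    (sum_two_geom (by positivity) (by positivity) hmu0.le hmu1 hlam0.le hlam1 le_rfl hTl n P)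
  refine (add_le_add t1 hsum).trans (le_of_eq (by ring))


end Nlem

-- abstract final comparison lemmas
lemma cmp1 {K F T Xv muP B : ℝ} (hK : 0 ≤ K) (hF : 0 ≤ F) (hT : 0 ≤ T) (hX : 0 ≤ Xv)
    (hmu : 0 ≤ muP) (hB : 0 ≤ B) :
    (Xv * muP + K * T) * B
      ≤ (Xv * muP * (1 + 3 * K * F * T + 2 * K ^ 2 * F ^ 2 * T ^ 2)
          + (K * T + 3 * K ^ 2 * F * T ^ 2 + 2 * K ^ 3 * F ^ 2 * T ^ 3)) * B := by
  refine mul_le_mul_of_nonneg_right ?_ hB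
  have d1 : 0 ≤ Xv * muP * (3 * K * F * T + 2 * K ^ 2 * F ^ 2 * T ^ 2) := by positivity
  have d2 : 0 ≤ 3 * K ^ 2 * F * T ^ 2 + 2 * K ^ 3 * F ^ 2 * T ^ 3 := by positivity
  nlinarith [d1, d2]

lemma cmp2 {K F T Xv muP B : ℝ} (hK : 0 ≤ K) (hF : 0 ≤ F) (hT : 0 ≤ T) (hX : 0 ≤ Xv)
    (hmu : 0 ≤ muP) (hB : 0 ≤ B) :
    (Xv * muP * (1 + K * F * T) + (K * T + K ^ 2 * F * T ^ 2)) * B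
      ≤ (Xv * muP * (1 + 3 * K * F * T + 2 * K ^ 2 * F ^ 2 * T ^ 2)
          + (K * T + 3 * K ^ 2 * F * T ^ 2 + 2 * K ^ 3 * F ^ 2 * T ^ 3)) * B := by
  refine mul_le_mul_of_nonneg_right ?_ hB
  have d1 : 0 ≤ Xv * muP * (2 * K * F * T + 2 * K ^ 2 * F ^ 2 * T ^ 2) := by positivity
  have d2 : 0 ≤ 2 * K ^ 2 * F * T ^ 2 + 2 * K ^ 3 * F ^ 2 * T ^ 3 := by positivity
  nlinarith [d1, d2]

lemma chainlem {W3 Z3 Xv muP B M δ' : ℝ} (hW3 : 0 ≤ W3) (hB : 0 ≤ B) (hX : 0 ≤ Xv)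
    (hmuM : muP ≤ M) (hZX : Z3 ≤ Xv * δ') (hδM : δ' ≤ M) :
    (Xv * muP * W3 + Z3) * B ≤ (W3 + 1) * Xv * B * M := by
  have a1 : Xv * muP * W3 ≤ Xv * M * W3 :=
    mul_le_mul_of_nonneg_right (mul_le_mul_of_nonneg_left hmuM hX) hW3
  have a2 : Z3 ≤ Xv * M := hZX.trans (mul_le_mul_of_nonneg_left hδM hX)
  calc (Xv * muP * W3 + Z3) * B ≤ (Xv * M * W3 + Xv * M) * B :=
        mul_le_mul_of_nonneg_right (by linarith) hB
    _ = (W3 + 1) * Xv * B * M := by ring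

end Aux


/-- Estimate on the quadratic coefficients of the conjugating maps: there is a constant
`Y = Y(C,D,ε)` and, for every `δ > 0`, a constant `X = X(C,D,ε,δ)`, such that whenever
the five terminal coefficients at `n = P` are bounded by `X`, all five coefficients
satisfy, for `n ∈ [p,P]`, the bound
`Y·X·max_{n≤s≤t≤P}{(|b_{t,s}|^{2-ε}/|a_{t,s}|)|a_{s,n}|^{1-ε}}·max{δ, D^{ε(P-n)/2}}`. -/
theorem quadratic_coefficient_estimate
    (C D k ε : ℝ)
    (hC : 0 < C) (hCD : C < D) (hD : D < 1)
    (hk2 : 2 < k) (hk : k < 11 / 5) (hDk : D ^ k < C)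
    (hε : 0 < ε ∧ ε < min (min ((11 - 5 * k) / 4) ((5 - 2 * k) / 3)) ((3 - k) / 2)) :
    ∃ Y : ℝ, 0 < Y ∧ ∀ δ : ℝ, 0 < δ → ∃ X : ℝ, 0 < X ∧
      ∀ (p P : ℕ) (a b : ℕ → ℂ)
        (α02 α11 α20 β02 β11 : ℕ → ℂ)
        (x02 r11 x11 r20a r20b x20 s02 y02 s11a s11b s11c y11 : ℕ → ℂ),
        p < P →
        (∀ n, p ≤ n → n < P →
          C ≤ ‖a n‖ ∧ ‖a n‖ ≤ D ∧
          C ≤ ‖b n‖ ∧ ‖b n‖ ≤ D) →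
        -- the backward recursions
        (∀ n, p ≤ n → n < P →
          α02 n = b n ^ 2 / a n * α02 (n + 1) + x02 n ∧
          α11 n = b n * α11 (n + 1) + r11 n * α02 (n + 1) + x11 n ∧
          α20 n = a n * α20 (n + 1) + r20a n * α02 (n + 1) + r20b n * α11 (n + 1)
            + x20 n ∧
          β02 n = b n * β02 (n + 1) + s02 n * α02 (n + 1) + y02 n ∧
          β11 n = a n * β11 (n + 1) + s11a n * α02 (n + 1) + s11b n * α11 (n + 1)
            + s11c n * β02 (n + 1) + y11 n) →
        -- all coefficients of the linear parts and the constants bounded by 4D²/C²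
        (∀ n, ‖x02 n‖ ≤ 4 * D ^ 2 / C ^ 2 ∧
          ‖r11 n‖ ≤ 4 * D ^ 2 / C ^ 2 ∧
          ‖x11 n‖ ≤ 4 * D ^ 2 / C ^ 2 ∧
          ‖r20a n‖ ≤ 4 * D ^ 2 / C ^ 2 ∧
          ‖r20b n‖ ≤ 4 * D ^ 2 / C ^ 2 ∧
          ‖x20 n‖ ≤ 4 * D ^ 2 / C ^ 2 ∧
          ‖s02 n‖ ≤ 4 * D ^ 2 / C ^ 2 ∧
          ‖y02 n‖ ≤ 4 * D ^ 2 / C ^ 2 ∧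
          ‖s11a n‖ ≤ 4 * D ^ 2 / C ^ 2 ∧
          ‖s11b n‖ ≤ 4 * D ^ 2 / C ^ 2 ∧
          ‖s11c n‖ ≤ 4 * D ^ 2 / C ^ 2 ∧
          ‖y11 n‖ ≤ 4 * D ^ 2 / C ^ 2) →
        -- terminal values bounded by X
        ‖α02 P‖ ≤ X → ‖α11 P‖ ≤ X →
        ‖α20 P‖ ≤ X → ‖β02 P‖ ≤ X →
        ‖β11 P‖ ≤ X →
        -- conclusion
        ∀ n, p ≤ n → n ≤ P →
          ∀ B : ℝ, (∀ s t, n ≤ s → s ≤ t → t ≤ P → maxTerm a b ε n s t ≤ B) →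
            ‖α02 n‖
                ≤ Y * X * B * max δ (D ^ (ε * ((P : ℝ) - (n : ℝ)) / 2)) ∧
            ‖α11 n‖
                ≤ Y * X * B * max δ (D ^ (ε * ((P : ℝ) - (n : ℝ)) / 2)) ∧
            ‖α20 n‖
                ≤ Y * X * B * max δ (D ^ (ε * ((P : ℝ) - (n : ℝ)) / 2)) ∧
            ‖β02 n‖
                ≤ Y * X * B * max δ (D ^ (ε * ((P : ℝ) - (n : ℝ)) / 2)) ∧
            ‖β11 n‖
                ≤ Y * X * B * max δ (D ^ (ε * ((P : ℝ) - (n : ℝ)) / 2)) := by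
  obtain ⟨hε0, _⟩ := hε
  have hD0 : 0 < D := hC.trans hCD
  have hmu0 : (0:ℝ) < D ^ (ε/2) := Real.rpow_pos_of_pos hD0 _
  have hmu1 : D ^ (ε/2) < 1 := Real.rpow_lt_one hD0.le hD (by linarith)
  have hmu1' : (0:ℝ) < 1 - D ^ (ε/2) := by linarith
  have hK0 : (0:ℝ) ≤ 4 * D ^ 2 / C ^ 2 := by positivity
  have hF0 : (0:ℝ) ≤ D / C ^ 2 := by positivity
  have hT0 : (0:ℝ) ≤ (1 - D ^ (ε/2))⁻¹ := inv_nonneg.mpr hmu1'.le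
  refine ⟨(1 + 3 * (4 * D ^ 2 / C ^ 2) * (D / C ^ 2) * (1 - D ^ (ε/2))⁻¹
      + 2 * (4 * D ^ 2 / C ^ 2) ^ 2 * (D / C ^ 2) ^ 2 * ((1 - D ^ (ε/2))⁻¹) ^ 2) + 1, ?_, ?_⟩
  · positivity
  intro δ hδ
  refine ⟨max 1 ((4 * D ^ 2 / C ^ 2 * (1 - D ^ (ε/2))⁻¹
      + 3 * (4 * D ^ 2 / C ^ 2) ^ 2 * (D / C ^ 2) * ((1 - D ^ (ε/2))⁻¹) ^ 2
      + 2 * (4 * D ^ 2 / C ^ 2) ^ 3 * (D / C ^ 2) ^ 2 * ((1 - D ^ (ε/2))⁻¹) ^ 3) / δ),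
    lt_of_lt_of_le one_pos (le_max_left _ _), ?_⟩
  set Z3 : ℝ := 4 * D ^ 2 / C ^ 2 * (1 - D ^ (ε/2))⁻¹
      + 3 * (4 * D ^ 2 / C ^ 2) ^ 2 * (D / C ^ 2) * ((1 - D ^ (ε/2))⁻¹) ^ 2
      + 2 * (4 * D ^ 2 / C ^ 2) ^ 3 * (D / C ^ 2) ^ 2 * ((1 - D ^ (ε/2))⁻¹) ^ 3 with hZ3def
  set X : ℝ := max 1 (Z3 / δ) with hXdef
  intro p P a b α02 α11 α20 β02 β11 x02 r11 x11 r20a r20b x20 s02 y02 s11a s11b s11c y11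
    hpP hab hrec hcoef h02P h11P h20P hb02P hb11P
  have hX1 : (1:ℝ) ≤ X := le_max_left _ _
  have hX0 : (0:ℝ) ≤ X := by linarith
  have hZX : Z3 ≤ X * δ := by
    have := le_max_right 1 (Z3 / δ)
    calc Z3 = Z3 / δ * δ := by field_simp
      _ ≤ X * δ := mul_le_mul_of_nonneg_right this hδ.le
  -- the five solution bounds (independent of n, B)
  have hα02 : ∀ m, p ≤ m → m ≤ P → ‖α02 m‖
      ≤ R1 a b X (4 * D ^ 2 / C ^ 2) P m := by
    intro m h1 h2
    exact H1 (fun m' hm1 hm2 => (hrec m' hm1 hm2).1) (fun m' => (hcoef m').1) h02P hX0 h1 h2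
  have hα11 : ∀ m, p ≤ m → m ≤ P → ‖α11 m‖
      ≤ R2 a b X (4 * D ^ 2 / C ^ 2) P m := by
    intro m h1 h2
    refine H2 hα02 (fun m' hm1 hm2 => ?_) (fun m' => (hcoef m').2.1) (fun m' => (hcoef m').2.2.1)
      h11P hX0 hK0 h1 h2
    rw [(hrec m' hm1 hm2).2.1]
    ring
  have hβ02 : ∀ m, p ≤ m → m ≤ P → ‖β02 m‖
      ≤ R2 a b X (4 * D ^ 2 / C ^ 2) P m := by
    intro m h1 h2
    refine H2 hα02 (fun m' hm1 hm2 => ?_) (fun m' => (hcoef m').2.2.2.2.2.2.1)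
      (fun m' => (hcoef m').2.2.2.2.2.2.2.1) hb02P hX0 hK0 h1 h2
    rw [(hrec m' hm1 hm2).2.2.2.1]
    ring
  have hα20 : ∀ m, p ≤ m → m ≤ P → ‖α20 m‖
      ≤ R3 a b X (4 * D ^ 2 / C ^ 2) P m := by
    intro m h1 h2
    refine H3 (g2 := α11) (g3 := α11) (q3 := fun _ => (0:ℂ)) hα02 hα11 hα11
      (fun m' hm1 hm2 => ?_) (fun m' => (hcoef m').2.2.2.1) (fun m' => (hcoef m').2.2.2.2.1)
      (fun m' => by simpa using hK0) (fun m' => (hcoef m').2.2.2.2.2.1) h20P hX0 hK0 h1 h2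
    rw [(hrec m' hm1 hm2).2.2.1]
    ring
  have hβ11 : ∀ m, p ≤ m → m ≤ P → ‖β11 m‖
      ≤ R3 a b X (4 * D ^ 2 / C ^ 2) P m := by
    intro m h1 h2
    refine H3 (g2 := α11) (g3 := β02) hα02 hα11 hβ02
      (fun m' hm1 hm2 => ?_) (fun m' => (hcoef m').2.2.2.2.2.2.2.2.1)
      (fun m' => (hcoef m').2.2.2.2.2.2.2.2.2.1) (fun m' => (hcoef m').2.2.2.2.2.2.2.2.2.2.1)
      (fun m' => (hcoef m').2.2.2.2.2.2.2.2.2.2.2) hb11P hX0 hK0 h1 h2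
    rw [(hrec m' hm1 hm2).2.2.2.2]
    ring
  -- now fix n and B
  intro n hpn hnP B hB
  have hB0 : 0 ≤ B := le_trans (maxTerm_nonneg a b ε n n n) (hB n n le_rfl le_rfl hnP)
  have hmuP0 : (0:ℝ) ≤ (D ^ (ε/2)) ^ (P - n) := pow_nonneg hmu0.le _
  have heq : (D ^ (ε/2)) ^ (P - n) = D ^ (ε * ((P : ℝ) - (n : ℝ)) / 2) := by
    rw [← Real.rpow_natCast (D ^ (ε/2)) (P - n), ← Real.rpow_mul hD0.le]
    congr 1
    rw [Nat.cast_sub hnP]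
    ring
  have hmuM : (D ^ (ε/2)) ^ (P - n) ≤ max δ (D ^ (ε * ((P : ℝ) - (n : ℝ)) / 2)) :=
    heq.le.trans (le_max_right _ _)
  have hδM : δ ≤ max δ (D ^ (ε * ((P : ℝ) - (n : ℝ)) / 2)) := le_max_left _ _
  have hchain := chainlem (W3 := 1 + 3 * (4 * D ^ 2 / C ^ 2) * (D / C ^ 2) * (1 - D ^ (ε/2))⁻¹
      + 2 * (4 * D ^ 2 / C ^ 2) ^ 2 * (D / C ^ 2) ^ 2 * ((1 - D ^ (ε/2))⁻¹) ^ 2)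
    (Z3 := Z3) (Xv := X) (muP := (D ^ (ε/2)) ^ (P - n)) (B := B)
    (M := max δ (D ^ (ε * ((P : ℝ) - (n : ℝ)) / 2))) (δ' := δ)
    (by positivity) hB0 hX0 hmuM hZX hδM
  have hc1 := cmp1 (K := 4 * D ^ 2 / C ^ 2) (F := D / C ^ 2) (T := (1 - D ^ (ε/2))⁻¹)
    (Xv := X) (muP := (D ^ (ε/2)) ^ (P - n)) (B := B) hK0 hF0 hT0 hX0 hmuP0 hB0
  have hc2 := cmp2 (K := 4 * D ^ 2 / C ^ 2) (F := D / C ^ 2) (T := (1 - D ^ (ε/2))⁻¹)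
    (Xv := X) (muP := (D ^ (ε/2)) ^ (P - n)) (B := B) hK0 hF0 hT0 hX0 hmuP0 hB0
  have hN1 := N1 hC hCD hD hε0 hab hB hX0 hK0 hpn hnP
  have hN2 := N2 hC hCD hD hε0 hab hB hX0 hK0 hpn hnP
  have hN3 := N3 hC hCD hD hε0 hab hB hX0 hK0 hpn hnP
  refine ⟨?_, ?_, ?_, ?_, ?_⟩
  · exact ((((hα02 n hpn hnP).trans hN1).trans hc1).trans hchain)
  · exact ((((hα11 n hpn hnP).trans hN2).trans hc2).trans hchain)
  · exact (((hα20 n hpn hnP).trans hN3).trans hchain)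
  · exact ((((hβ02 n hpn hnP).trans hN2).trans hc2).trans hchain)
  · exact (((hβ11 n hpn hnP).trans hN3).trans hchain)
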